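/- With F_n(m; t) = e^{-t} (t^m / m!) ∑_{k=0}^∞ [(n)_k / (m+1)_k] (t^k / k!), the summation identity ∑_{l=m}^∞ F_n(l; t) = F_{n+1}(m; t) holds for all integers n, all m ≥ 0, and all t ≥ 0. -/

import Mathlib

/-- The Pochhammer symbol `(a)_k = a (a+1) ⋯ (a+k-1)`. -/
noncomputable def poch (a : ℝ) (k : ℕ) : ℝ := ∏ i ∈ Finset.range k, (a + i)

/-- Schütz's function `F_n(m;t) = e^{-t} (t^m/m!) ∑_{k≥0} [(n)_k/(m+1)_k] t^k/k!`. -/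
noncomputable def schuetzF (n : ℤ) (m : ℕ) (t : ℝ) : ℝ :=
  Real.exp (-t) * t ^ m / (m.factorial : ℝ) *
    ∑' k : ℕ, poch (n : ℝ) k / poch ((m : ℝ) + 1) k * t ^ k / (k.factorial : ℝ)

lemma poch_zero (a : ℝ) : poch a 0 = 1 := by simp [poch]

lemma poch_succ (a : ℝ) (k : ℕ) : poch a (k + 1) = poch a k * (a + k) := by
  simp [poch, Finset.prod_range_succ]

lemma poch_succ' (a : ℝ) (k : ℕ) : poch a (k + 1) = a * poch (a + 1) k := by
  rw [poch, Finset.prod_range_succ']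
  push_cast
  rw [mul_comm]
  congr 1
  · norm_num
  · exact Finset.prod_congr rfl (fun i _ => by push_cast; ring)

lemma poch_pos (m k : ℕ) : 0 < poch ((m : ℝ) + 1) k := by
  apply Finset.prod_pos
  intro i _
  positivity

lemma fact_mul_poch (m k : ℕ) :
    (m.factorial : ℝ) * poch ((m : ℝ) + 1) k = ((m + k).factorial : ℝ) := by
  induction k with
  | zero => simp [poch]
  | succ k ih =>
    rw [poch_succ, ← mul_assoc, ih, show m + (k + 1) = (m + k) + 1 from rfl,
      Nat.factorial_succ]
    push_cast
    ring

lemma sum_poch_div_fact (a : ℝ) (j : ℕ) :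
    ∑ k ∈ Finset.range (j + 1), poch a k / (k.factorial : ℝ)
      = poch (a + 1) j / (j.factorial : ℝ) := by
  induction j with
  | zero => simp [poch]
  | succ j ih =>
    rw [Finset.sum_range_succ, ih, poch_succ' a, poch_succ (a + 1) j, Nat.factorial_succ]
    have h1 : (j.factorial : ℝ) ≠ 0 := Nat.cast_ne_zero.mpr j.factorial_ne_zero
    have h2 : ((j : ℝ) + 1) ≠ 0 := by positivity
    field_simp
    push_cast
    ring

lemma nat_fact_bound (N k : ℕ) : (N + k).factorial ≤ N.factorial * (k.factorial * 2 ^ (N + k)) := by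
  have h1 : (N + k).choose k * k.factorial * N.factorial = (N + k).factorial := by
    have := Nat.choose_mul_factorial_mul_factorial (Nat.le_add_left k N)
    simpa [Nat.add_sub_cancel] using this
  have h2 : (N + k).choose k ≤ 2 ^ (N + k) := by
    calc (N + k).choose k ≤ ∑ i ∈ Finset.range (N + k + 1), (N + k).choose i :=
          Finset.single_le_sum (fun i _ => Nat.zero_le _) (Finset.mem_range.mpr (by omega))
      _ = 2 ^ (N + k) := Nat.sum_range_choose _
  calc (N + k).factorial = (N + k).choose k * k.factorial * N.factorial := h1.symm
    _ ≤ 2 ^ (N + k) * k.factorial * N.factorial := by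
        exact Nat.mul_le_mul_right _ (Nat.mul_le_mul_right _ h2)
    _ = N.factorial * (k.factorial * 2 ^ (N + k)) := by ring

lemma abs_poch_le (n : ℤ) (k : ℕ) :
    |poch (n : ℝ) k| ≤ (k.factorial : ℝ) * 2 ^ (n.natAbs + k) := by
  set N := n.natAbs with hN
  have step1 : |poch (n : ℝ) k| ≤ poch ((N : ℝ) + 1) k := by
    rw [poch, poch, Finset.abs_prod]
    apply Finset.prod_le_prod (fun i _ => abs_nonneg _)
    intro i _
    have : |(n : ℝ)| = (N : ℝ) := by
      rw [hN, Nat.cast_natAbs, Int.cast_abs]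
    calc |(n : ℝ) + i| ≤ |(n : ℝ)| + |(i : ℝ)| := abs_add_le _ _
      _ = (N : ℝ) + i := by rw [this, Nat.abs_cast]
      _ ≤ (N : ℝ) + 1 + i := by linarith
  have step2 : poch ((N : ℝ) + 1) k ≤ (k.factorial : ℝ) * 2 ^ (N + k) := by
    have hfact : (0 : ℝ) < (N.factorial : ℝ) := by positivity
    have := fact_mul_poch N k
    have hnat : ((N + k).factorial : ℝ) ≤ (N.factorial : ℝ) * ((k.factorial : ℝ) * 2 ^ (N + k)) := by
      have := nat_fact_bound N k
      exact_mod_cast this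
    nlinarith [poch_pos N k]
  linarith

noncomputable def core (n : ℤ) (t : ℝ) (l k : ℕ) : ℝ :=
  poch (n : ℝ) k * t ^ (l + k) / (((l + k).factorial : ℝ) * (k.factorial : ℝ))

lemma schuetzF_eq_core (n : ℤ) (l : ℕ) (t : ℝ) :
    schuetzF n l t = Real.exp (-t) * ∑' k : ℕ, core n t l k := by
  unfold schuetzF
  calc Real.exp (-t) * t ^ l / (l.factorial : ℝ) *
        ∑' k : ℕ, poch (n : ℝ) k / poch ((l : ℝ) + 1) k * t ^ k / (k.factorial : ℝ)
      = Real.exp (-t) *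
        ∑' k : ℕ, t ^ l / (l.factorial : ℝ) *
          (poch (n : ℝ) k / poch ((l : ℝ) + 1) k * t ^ k / (k.factorial : ℝ)) := by
        rw [tsum_mul_left]; ring
    _ = Real.exp (-t) * ∑' k : ℕ, core n t l k := by
        congr 1
        apply tsum_congr
        intro k
        have hq : poch ((l : ℝ) + 1) k ≠ 0 := (poch_pos l k).ne'
        have hl : (l.factorial : ℝ) ≠ 0 := Nat.cast_ne_zero.mpr l.factorial_ne_zero
        have hk : (k.factorial : ℝ) ≠ 0 := Nat.cast_ne_zero.mpr k.factorial_ne_zero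
        rw [core, ← fact_mul_poch l k, pow_add]
        field_simp

lemma summable_core (n : ℤ) (m : ℕ) (t : ℝ) (ht : 0 ≤ t) :
    Summable (fun p : ℕ × ℕ => core n t (m + p.1) p.2) := by
  set N := n.natAbs with hN
  set A : ℕ → ℝ := fun k => (2 : ℝ) ^ N * ((2 * t) ^ k / (k.factorial : ℝ)) with hA
  set B : ℕ → ℝ := fun i => t ^ (m + i) / ((m + i).factorial : ℝ) with hB
  have hAsum : Summable A := (Real.summable_pow_div_factorial (2 * t)).mul_left _
  have hBsum : Summable B := by
    have := (Real.summable_pow_div_factorial t).comp_injective (add_right_injective m)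
    exact this
  have hABsum : Summable (fun p : ℕ × ℕ => B p.1 * A p.2) :=
    Summable.mul_of_nonneg hBsum hAsum
      (fun i => by positivity) (fun k => by positivity)
  have hbound : ∀ p : ℕ × ℕ, |core n t (m + p.1) p.2| ≤ B p.1 * A p.2 := by
    rintro ⟨i, k⟩
    have htpow : (0:ℝ) ≤ t ^ (m + i + k) := by positivity
    have habs : |core n t (m + i) k|
        = |poch (n : ℝ) k| * t ^ (m + i + k) / (((m + i + k).factorial : ℝ) * (k.factorial : ℝ)) := by
      rw [core, abs_div, abs_mul, abs_of_nonneg htpow]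
      congr 1
      exact abs_of_nonneg (mul_nonneg (Nat.cast_nonneg _) (Nat.cast_nonneg _))
    rw [habs]
    have hnum : |poch (n : ℝ) k| * t ^ (m + i + k)
        ≤ ((k.factorial : ℝ) * 2 ^ (N + k)) * t ^ (m + i + k) :=
      mul_le_mul_of_nonneg_right (abs_poch_le n k) htpow
    have hden : (((m + i).factorial : ℝ) * (k.factorial : ℝ)) * (k.factorial : ℝ)
        ≤ ((m + i + k).factorial : ℝ) * (k.factorial : ℝ) := by
      have h1 : (m + i).factorial * k.factorial ≤ (m + i + k).factorial :=
        Nat.le_of_dvd (Nat.factorial_pos _) (Nat.factorial_mul_factorial_dvd_factorial_add _ _)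
      have h1' : ((m + i).factorial : ℝ) * (k.factorial : ℝ) ≤ ((m + i + k).factorial : ℝ) := by
        exact_mod_cast h1
      exact mul_le_mul_of_nonneg_right h1' (by positivity)
    have hdenpos : (0:ℝ) < (((m + i).factorial : ℝ) * (k.factorial : ℝ)) * (k.factorial : ℝ) := by
      positivity
    calc |poch (n : ℝ) k| * t ^ (m + i + k) / (((m + i + k).factorial : ℝ) * (k.factorial : ℝ))
        ≤ ((k.factorial : ℝ) * 2 ^ (N + k)) * t ^ (m + i + k) /
            ((((m + i).factorial : ℝ) * (k.factorial : ℝ)) * (k.factorial : ℝ)) := by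
          exact div_le_div₀ (by positivity) hnum hdenpos hden
      _ = B i * A k := by
          have hk : (k.factorial : ℝ) ≠ 0 := Nat.cast_ne_zero.mpr k.factorial_ne_zero
          have hmi : ((m + i).factorial : ℝ) ≠ 0 := Nat.cast_ne_zero.mpr (m + i).factorial_ne_zero
          simp only [hB, hA, mul_pow, pow_add]
          field_simp
  have habs_sum : Summable (fun p : ℕ × ℕ => |core n t (m + p.1) p.2|) :=
    Summable.of_nonneg_of_le (fun p => abs_nonneg _) hbound hABsum
  exact summable_abs_iff.mp habs_sum

/-- `∑_{l=m}^∞ F_n(l;t) = F_{n+1}(m;t)`. -/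
theorem tsum_schuetzF (n : ℤ) (m : ℕ) (t : ℝ) (ht : 0 ≤ t) :
    ∑' i : ℕ, schuetzF n (m + i) t = schuetzF (n + 1) m t := by
  have hf : Summable (fun p : ℕ × ℕ => core n t (m + p.1) p.2) := summable_core n m t ht
  set f : ℕ × ℕ → ℝ := fun p => core n t (m + p.1) p.2 with hfdef
  set e : ℕ × ℕ → ℕ × ℕ := fun p => (p.1 + p.2, p.2) with hedef
  have he : Function.Injective e := by
    rintro ⟨a, b⟩ ⟨c, d⟩ h
    simp only [hedef, Prod.mk.injEq] at h
    obtain ⟨h1, h2⟩ := h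
    subst h2
    exact Prod.ext (by omega) rfl
  set g : ℕ × ℕ → ℝ := fun q => if q.2 ≤ q.1 then f (q.1 - q.2, q.2) else 0 with hgdef
  have hge : ∀ p, g (e p) = f p := by
    rintro ⟨i, k⟩
    simp [hgdef, hedef]
  have hsupp : ∀ q ∉ Set.range e, g q = 0 := by
    rintro ⟨j, k⟩ hq
    by_contra h
    apply hq
    have hk : k ≤ j := by
      by_contra hk
      exact h (if_neg hk)
    refine ⟨(j - k, k), ?_⟩
    show (j - k + k, k) = (j, k)
    exact Prod.ext (by omega) rfl
  have hg : Summable g := by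
    rw [← he.summable_iff hsupp]
    have : g ∘ e = f := funext hge
    rw [this]
    exact hf
  have hf1 : ∀ i : ℕ, Summable (fun k => f (i, k)) := by
    intro i
    have hinj : Function.Injective (fun k : ℕ => ((i, k) : ℕ × ℕ)) :=
      fun k₁ k₂ h => by simpa using h
    exact hf.comp_injective hinj
  have hg1 : ∀ j : ℕ, Summable (fun k => g (j, k)) := by
    intro j
    have hinj : Function.Injective (fun k : ℕ => ((j, k) : ℕ × ℕ)) :=
      fun k₁ k₂ h => by simpa using h
    exact hg.comp_injective hinj
  calc ∑' i : ℕ, schuetzF n (m + i) t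
      = ∑' i : ℕ, Real.exp (-t) * ∑' k : ℕ, f (i, k) :=
        tsum_congr fun i => schuetzF_eq_core n (m + i) t
    _ = Real.exp (-t) * ∑' i : ℕ, ∑' k : ℕ, f (i, k) := tsum_mul_left
    _ = Real.exp (-t) * ∑' p : ℕ × ℕ, f p := by rw [Summable.tsum_prod' hf hf1]
    _ = Real.exp (-t) * ∑' q : ℕ × ℕ, g q := by
        congr 1
        rw [← he.tsum_eq (Function.support_subset_iff'.2 hsupp)]
        exact tsum_congr fun p => (hge p).symm
    _ = Real.exp (-t) * ∑' j : ℕ, ∑' k : ℕ, g (j, k) := by rw [Summable.tsum_prod' hg hg1]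
    _ = Real.exp (-t) * ∑' j : ℕ, core (n + 1) t m j := by
        congr 1
        apply tsum_congr
        intro j
        have hz : ∀ k ∉ Finset.range (j + 1), g (j, k) = 0 := by
          intro k hk
          rw [Finset.mem_range] at hk
          exact if_neg (by omega)
        rw [tsum_eq_sum hz]
        have hterm : ∀ k ∈ Finset.range (j + 1), g (j, k)
            = t ^ (m + j) / ((m + j).factorial : ℝ) * (poch (n : ℝ) k / (k.factorial : ℝ)) := by
          intro k hk
          rw [Finset.mem_range] at hk
          have hkj : k ≤ j := by omega
          rw [hgdef]
          simp only [if_pos hkj]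
          rw [hfdef]
          simp only
          rw [core]
          have hidx : m + (j - k) + k = m + j := by omega
          rw [hidx]
          ring
        rw [Finset.sum_congr rfl hterm, ← Finset.mul_sum, sum_poch_div_fact]
        rw [core]
        push_cast
        ring
    _ = schuetzF (n + 1) m t := (schuetzF_eq_core (n + 1) m t).symm
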